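/- arXiv:1310.4068 — 2 statements merged into one kernel-verified Lean document; each statement's English description precedes it below -/
import Mathlib

section
/- Let $c, \tilde{C}, h \ge 0$ and let $y, z : [0,T] \to [0,\infty)$ be functions with $y$ differentiable satisfying $y'(t) + z(t) \le c\,(y(t) + h\,y(t)^2 + h^2 y(t)^3 + \tilde{C})$ for $0 \le t \le T$ and $y(0) = y_0$. If $h$ is small enough that $1 - h (y_0 + \tilde{C})^2 (e^{2(1+h)ct} - 1) > 0$ for all $t \in [0,T]$, then for all $t \in [0,T]$, $y(t) + \int_0^t z(s)\,ds \le \dfrac{e^{(1+h)ct}(y_0+\tilde{C})}{\sqrt{1 - h (y_0+\tilde{C})^2 (e^{2(1+h)ct}-1)}}$. -/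
open intervalIntegral

set_option maxHeartbeats 2000000 in
/-- Generalized Gronwall inequality with quadratic and cubic perturbations
controlled by a small parameter `h`. -/
theorem stmt_0 (T c C' h y₀ : ℝ) (hT : 0 ≤ T) (hc : 0 ≤ c) (hC' : 0 ≤ C') (hh : 0 ≤ h)
    (y y' z : ℝ → ℝ)
    (hy_nonneg : ∀ t ∈ Set.Icc (0 : ℝ) T, 0 ≤ y t)
    (hz_nonneg : ∀ t ∈ Set.Icc (0 : ℝ) T, 0 ≤ z t)
    (hz_int : MeasureTheory.IntegrableOn z (Set.Icc (0 : ℝ) T))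
    (hderiv : ∀ t ∈ Set.Icc (0 : ℝ) T, HasDerivAt y (y' t) t)
    (hineq : ∀ t ∈ Set.Icc (0 : ℝ) T,
      y' t + z t ≤ c * (y t + h * y t ^ 2 + h ^ 2 * y t ^ 3 + C'))
    (hy0 : y 0 = y₀)
    (hsmall : ∀ t ∈ Set.Icc (0 : ℝ) T,
      0 < 1 - h * (y₀ + C') ^ 2 * (Real.exp (2 * (1 + h) * c * t) - 1)) :
    ∀ t ∈ Set.Icc (0 : ℝ) T,
      y t + ∫ s in (0 : ℝ)..t, z s ≤
        Real.exp ((1 + h) * c * t) * (y₀ + C') /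
          Real.sqrt (1 - h * (y₀ + C') ^ 2 * (Real.exp (2 * (1 + h) * c * t) - 1)) := by
  set a : ℝ := (1 + h) * c with ha_def
  have ha : 0 ≤ a := mul_nonneg (by linarith) hc
  set w₀ : ℝ := y₀ + C' with hw₀_def
  have hy₀ : 0 ≤ y₀ := hy0 ▸ hy_nonneg 0 (Set.left_mem_Icc.2 hT)
  have hw₀ : 0 ≤ w₀ := by positivity
  set D : ℝ → ℝ := fun t => 1 - h * w₀ ^ 2 * (Real.exp (2 * (1 + h) * c * t) - 1) with hD_def
  set φ : ℝ → ℝ := fun t => Real.exp ((1 + h) * c * t) * w₀ / Real.sqrt (D t) with hφ_def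
  have hDpos : ∀ t ∈ Set.Icc (0 : ℝ) T, 0 < D t := hsmall
  -- derivative of D
  have hDd : ∀ t : ℝ, HasDerivAt D (-(2 * a * h * w₀ ^ 2 * Real.exp (2 * (1 + h) * c * t))) t := by
    intro t
    have h1 : HasDerivAt (fun t : ℝ => Real.exp (2 * (1 + h) * c * t))
        (2 * (1 + h) * c * Real.exp (2 * (1 + h) * c * t)) t := by
      simpa [mul_comm, mul_one] using ((hasDerivAt_id t).const_mul (2 * (1 + h) * c)).exp
    have := ((h1.sub_const 1).const_mul (h * w₀ ^ 2)).const_sub 1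
    refine this.congr_deriv ?_
    ring
  -- derivative of φ
  have hφd : ∀ t : ℝ, 0 < D t → HasDerivAt φ (a * φ t + a * h * φ t ^ 3) t := by
    intro t hDt
    have hs : 0 < Real.sqrt (D t) := Real.sqrt_pos.2 hDt
    have hnum : HasDerivAt (fun t : ℝ => Real.exp ((1 + h) * c * t) * w₀)
        (a * Real.exp ((1 + h) * c * t) * w₀) t := by
      have : HasDerivAt (fun t : ℝ => Real.exp ((1 + h) * c * t))
          ((1 + h) * c * Real.exp ((1 + h) * c * t)) t := by
        simpa [mul_comm, mul_one] using ((hasDerivAt_id t).const_mul ((1 + h) * c)).exp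
      simpa [mul_assoc, ha_def] using this.mul_const w₀
    have hden : HasDerivAt (fun t : ℝ => Real.sqrt (D t))
        ((-(2 * a * h * w₀ ^ 2 * Real.exp (2 * (1 + h) * c * t))) / (2 * Real.sqrt (D t))) t :=
      (hDd t).sqrt hDt.ne'
    have := hnum.div hden hs.ne'
    have hE2 : Real.exp (2 * (1 + h) * c * t) = Real.exp ((1 + h) * c * t) ^ 2 := by
      rw [← Real.exp_nat_mul]; push_cast; ring_nf
    refine this.congr_deriv ?_
    symm
    rw [hE2]
    set s := Real.sqrt (D t) with hs_def
    set E := Real.exp ((1 + h) * c * t) with hE_def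
    simp only [hφ_def, ← hs_def, ← hE_def]
    field_simp
    ring
  -- basic facts about φ
  have hφca : ∀ t ∈ Set.Icc (0:ℝ) T, ContinuousAt φ t := fun t ht =>
    (hφd t (hDpos t ht)).continuousAt
  have hφnonneg : ∀ t : ℝ, 0 ≤ φ t := fun t =>
    div_nonneg (mul_nonneg (Real.exp_pos _).le hw₀) (Real.sqrt_nonneg _)
  have hφ0 : φ 0 = w₀ := by
    simp [hφ_def, hD_def, mul_zero, Real.exp_zero, Real.sqrt_one]
  set f : ℝ → ℝ := fun t => y t + C' with hf_def
  have hfcont : ContinuousOn f (Set.Icc 0 T) := fun t ht =>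
    ((hderiv t ht).continuousAt.add continuousAt_const).continuousWithinAt
  have hfnonneg : ∀ t ∈ Set.Icc (0:ℝ) T, 0 ≤ f t := fun t ht =>
    add_nonneg (hy_nonneg t ht) hC'
  have hf0 : f 0 = w₀ := by simp [hf_def, hy0, hw₀_def]
  obtain ⟨x₀, hx₀, hM⟩ := isCompact_Icc.exists_isMaxOn ⟨0, Set.left_mem_Icc.2 hT⟩ hfcont
  set M : ℝ := f x₀ with hM_def
  have hM0 : 0 ≤ M := hfnonneg x₀ hx₀
  set K : ℝ := a * (1 + 3 * h * M ^ 2) + 1 with hK_def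
  -- key pointwise bound on y'
  have hyb : ∀ x ∈ Set.Icc (0:ℝ) T, y' x ≤ a * f x + a * h * f x ^ 3 - z x := by
    intro x hx
    have h1 := hineq x hx
    have hy := hy_nonneg x hx
    have h2 : c * (y x + h * y x ^ 2 + h ^ 2 * y x ^ 3 + C') ≤ a * f x + a * h * f x ^ 3 := by
      simp only [hf_def, ha_def]
      set u := y x with hu_def
      set g := u + C' with hg_def
      have hg0 : 0 ≤ g := by positivity
      have hug : u ≤ g := by linarith
      have hu2 : u ^ 2 ≤ g ^ 2 := pow_le_pow_left₀ hy hug 2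
      have hu3 : u ^ 3 ≤ g ^ 3 := pow_le_pow_left₀ hy hug 3
      have e1 : u + h * u ^ 2 + h ^ 2 * u ^ 3 + C' ≤ g + h * g ^ 2 + h ^ 2 * g ^ 3 := by
        nlinarith [mul_le_mul_of_nonneg_left hu2 hh, mul_le_mul_of_nonneg_left hu3 (mul_nonneg hh hh)]
      have e2 : g + h * g ^ 2 + h ^ 2 * g ^ 3 ≤ (1 + h) * (g + h * g ^ 3) := by
        nlinarith [mul_nonneg hh (mul_nonneg hg0 (by nlinarith [sq_nonneg (g - 1)] : (0:ℝ) ≤ g ^ 2 + 1 - g))]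
      calc c * (u + h * u ^ 2 + h ^ 2 * u ^ 3 + C')
          ≤ c * ((1 + h) * (g + h * g ^ 3)) :=
            mul_le_mul_of_nonneg_left (e1.trans e2) hc
        _ = (1 + h) * c * g + (1 + h) * c * h * g ^ 3 := by ring
    linarith
  -- comparison: f ≤ φ on [0, T]
  have hcomp : ∀ t ∈ Set.Icc (0:ℝ) T, f t ≤ φ t := by
    have key : ∀ ε > (0:ℝ), ∀ t ∈ Set.Icc (0:ℝ) T, f t ≤ φ t + ε * Real.exp (K * t) := by
      intro ε hε
      have hexpd : ∀ x : ℝ, HasDerivAt (fun t : ℝ => ε * Real.exp (K * t))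
          (ε * (K * Real.exp (K * x))) x := by
        intro x
        have : HasDerivAt (fun t : ℝ => Real.exp (K * t)) (K * Real.exp (K * x)) x := by
          simpa [mul_comm, mul_one] using ((hasDerivAt_id x).const_mul K).exp
        exact this.const_mul ε
      have hfd' : ∀ x ∈ Set.Ico (0:ℝ) T, HasDerivWithinAt f (y' x) (Set.Ici x) x := fun x hx =>
        ((hderiv x (Set.mem_Icc_of_Ico hx)).add_const C').hasDerivWithinAt
      have ha0' : f 0 ≤ φ 0 + ε * Real.exp (K * 0) := by
        rw [hf0, hφ0, mul_zero, Real.exp_zero, mul_one]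
        linarith
      have hφcontOn : ContinuousOn φ (Set.Icc (0:ℝ) T) := fun x hx => (hφca x hx).continuousWithinAt
      have hBcont : ContinuousOn (fun t => φ t + ε * Real.exp (K * t)) (Set.Icc (0:ℝ) T) :=
        hφcontOn.add
          (continuousOn_const.mul (Real.continuous_exp.comp (continuous_const.mul continuous_id)).continuousOn)
      have hBd : ∀ x ∈ Set.Ico (0:ℝ) T, HasDerivWithinAt (fun t => φ t + ε * Real.exp (K * t))
          ((a * φ x + a * h * φ x ^ 3) + ε * (K * Real.exp (K * x))) (Set.Ici x) x := fun x hx =>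
        ((hφd x (hDpos x (Set.mem_Icc_of_Ico hx))).add (hexpd x)).hasDerivWithinAt
      have hbound : ∀ x ∈ Set.Ico (0:ℝ) T, f x = φ x + ε * Real.exp (K * x) →
          y' x < (a * φ x + a * h * φ x ^ 3) + ε * (K * Real.exp (K * x)) := by
        intro x hx hfB
        have hx' : x ∈ Set.Icc (0:ℝ) T := Set.mem_Icc_of_Ico hx
        have h1 : y' x ≤ a * f x + a * h * f x ^ 3 :=
          (hyb x hx').trans (by linarith [hz_nonneg x hx'])
        have hd : 0 < ε * Real.exp (K * x) := by positivity
        have hp0 : 0 ≤ φ x := hφnonneg x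
        have hfM : f x ≤ M := hM hx'
        apply lt_of_le_of_lt h1
        rw [hfB]
        set p := φ x
        set d := ε * Real.exp (K * x)
        have hpdM : p + d ≤ M := by rw [← hfB]; exact hfM
        have h3 : (p + d) ^ 2 ≤ M ^ 2 := by nlinarith
        have h4 : a * h * d * ((p + d) ^ 2 + (p + d) * p + p ^ 2) ≤ a * h * d * (3 * M ^ 2) := by
          have : (p + d) ^ 2 + (p + d) * p + p ^ 2 ≤ 3 * M ^ 2 := by nlinarith
          exact mul_le_mul_of_nonneg_left this (by positivity)
        have hKd : ε * (K * Real.exp (K * x)) = K * d := by ring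
        rw [hKd, hK_def]
        nlinarith [hd, mul_nonneg ha hd.le, h4]
      exact fun t ht => image_le_of_deriv_right_lt_deriv_boundary' hfcont hfd' ha0' hBcont hBd hbound ht
    intro t ht
    apply le_of_forall_pos_le_add
    intro δ hδ
    have := key (δ / Real.exp (K * t)) (by positivity) t ht
    rwa [div_mul_cancel₀ _ (Real.exp_pos _).ne'] at this
  -- final integration step
  intro t ht
  obtain ⟨ht0, htT⟩ := ht
  set ψ : ℝ → ℝ := fun s => a * φ s + a * h * φ s ^ 3 with hψ_def
  have hsub : Set.Icc (0:ℝ) t ⊆ Set.Icc (0:ℝ) T := Set.Icc_subset_Icc le_rfl htT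
  have hφcont' : ContinuousOn φ (Set.Icc 0 t) := fun x hx => (hφca x (hsub hx)).continuousWithinAt
  have hψcont : ContinuousOn ψ (Set.Icc 0 t) :=
    (continuousOn_const.mul hφcont').add (continuousOn_const.mul (hφcont'.pow 3))
  have hzint' : MeasureTheory.IntegrableOn z (Set.Icc 0 t) := hz_int.mono_set hsub
  have hψint : MeasureTheory.IntegrableOn ψ (Set.Icc 0 t) := hψcont.integrableOn_Icc
  have hzII : IntervalIntegrable z MeasureTheory.volume 0 t :=
    (Set.uIcc_of_le ht0 ▸ hzint').intervalIntegrable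
  have hψII : IntervalIntegrable ψ MeasureTheory.volume 0 t :=
    (Set.uIcc_of_le ht0 ▸ hψint).intervalIntegrable
  have h1 : y t - y 0 ≤ ∫ s in (0:ℝ)..t, (ψ s - z s) := by
    apply sub_le_integral_of_hasDeriv_right_of_le ht0
      (fun x hx => (hderiv x (hsub hx)).continuousAt.continuousWithinAt)
      (fun x hx => (hderiv x (hsub (Set.Ioo_subset_Icc_self hx))).hasDerivWithinAt)
      (hψint.sub hzint')
    intro x hx
    have hx' : x ∈ Set.Icc (0:ℝ) T := hsub (Set.Ioo_subset_Icc_self hx)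
    have h2 := hyb x hx'
    have hmono : a * f x + a * h * f x ^ 3 ≤ ψ x := by
      have hle := hcomp x hx'
      have hf0' := hfnonneg x hx'
      have hcube : f x ^ 3 ≤ φ x ^ 3 := pow_le_pow_left₀ hf0' hle 3
      have q1 : a * f x ≤ a * φ x := mul_le_mul_of_nonneg_left hle ha
      have q2 : a * h * f x ^ 3 ≤ a * h * φ x ^ 3 :=
        mul_le_mul_of_nonneg_left hcube (mul_nonneg ha hh)
      simp only [hψ_def]
      linarith
    simp only [Pi.sub_apply]
    linarith
  have h2 : (∫ s in (0:ℝ)..t, ψ s) = φ t - w₀ := by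
    rw [intervalIntegral.integral_eq_sub_of_hasDerivAt
      (fun x hx => hφd x (hDpos x (hsub (by rwa [Set.uIcc_of_le ht0] at hx)))) hψII, hφ0]
  have h3 : (∫ s in (0:ℝ)..t, (ψ s - z s)) = (∫ s in (0:ℝ)..t, ψ s) - ∫ s in (0:ℝ)..t, z s :=
    intervalIntegral.integral_sub hψII hzII
  have hgoal : y t + (∫ s in (0:ℝ)..t, z s) ≤ φ t := by
    rw [hy0] at h1
    linarith [h1, h2, h3, hw₀_def, hC']
  exact hgoal
end

section
/- Let $c, h \ge 0$ and let $\eta : [0,T] \to [0,\infty)$ be differentiable with $\eta'(t) \le c\big((1+h)\eta(t) + (h+h^2)\eta(t)^3\big)$ for all $t \in [0,T]$, with $\eta(0) = \eta_0 > 0$. If $1 - h\,\eta_0^2\,(e^{2(1+h)ct} - 1) > 0$ for all $t \in [0,T]$, then $\eta(t)^2 \le \dfrac{e^{2(1+h)ct}\,\eta_0^2}{1 - h\,\eta_0^2\,(e^{2(1+h)ct} - 1)}$ for all $t \in [0,T]$. -/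
/-- Core integration step of the generalized Gronwall inequality. -/
theorem stmt_1 (T c h η₀ : ℝ) (hT : 0 ≤ T) (hc : 0 ≤ c) (hh : 0 ≤ h) (hη₀ : 0 < η₀)
    (η η' : ℝ → ℝ)
    (hnonneg : ∀ t ∈ Set.Icc (0 : ℝ) T, 0 ≤ η t)
    (hderiv : ∀ t ∈ Set.Icc (0 : ℝ) T, HasDerivAt η (η' t) t)
    (hineq : ∀ t ∈ Set.Icc (0 : ℝ) T,
      η' t ≤ c * ((1 + h) * η t + (h + h ^ 2) * η t ^ 3))
    (h0 : η 0 = η₀)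
    (hsmall : ∀ t ∈ Set.Icc (0 : ℝ) T,
      0 < 1 - h * η₀ ^ 2 * (Real.exp (2 * (1 + h) * c * t) - 1)) :
    ∀ t ∈ Set.Icc (0 : ℝ) T,
      η t ^ 2 ≤ Real.exp (2 * (1 + h) * c * t) * η₀ ^ 2 /
        (1 - h * η₀ ^ 2 * (Real.exp (2 * (1 + h) * c * t) - 1)) := by
  set K : ℝ := 2 * (1 + h) * c with hK
  set g : ℝ → ℝ := fun t => Real.exp (-(K * t)) * (η t ^ 2 / (1 + h * η t ^ 2)) with hg
  have hvpos : ∀ t : ℝ, (0 : ℝ) < 1 + h * η t ^ 2 := by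
    intro t; positivity
  -- derivative of g at every point of Icc
  have hgderiv : ∀ x ∈ Set.Icc (0 : ℝ) T,
      HasDerivAt g
        (Real.exp (-(K * x)) * -(K * 1) * (η x ^ 2 / (1 + h * η x ^ 2)) +
          Real.exp (-(K * x)) *
            (((2 : ℕ) : ℝ) * η x ^ 1 * η' x * (1 + h * η x ^ 2) -
              η x ^ 2 * (0 + h * (((2 : ℕ) : ℝ) * η x ^ 1 * η' x))) /
              (1 + h * η x ^ 2) ^ 2) x := by
    intro x hx
    have hu : HasDerivAt (fun t => η t ^ 2) (((2 : ℕ) : ℝ) * η x ^ 1 * η' x) x :=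
      (hderiv x hx).pow 2
    have hv : HasDerivAt (fun t => 1 + h * η t ^ 2)
        (0 + h * (((2 : ℕ) : ℝ) * η x ^ 1 * η' x)) x :=
      (hasDerivAt_const x (1 : ℝ)).add (hu.const_mul h)
    have hq : HasDerivAt (fun t => η t ^ 2 / (1 + h * η t ^ 2))
        ((((2 : ℕ) : ℝ) * η x ^ 1 * η' x * (1 + h * η x ^ 2) -
          η x ^ 2 * (0 + h * (((2 : ℕ) : ℝ) * η x ^ 1 * η' x))) / (1 + h * η x ^ 2) ^ 2) x :=
      hu.div hv (ne_of_gt (hvpos x))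
    have he : HasDerivAt (fun t : ℝ => Real.exp (-(K * t)))
        (Real.exp (-(K * x)) * -(K * 1)) x :=
      (((hasDerivAt_id x).const_mul K).neg).exp
    have := he.mul hq
    exact this.congr_deriv (by ring)
  -- the derivative is nonpositive on the interior
  have hderiv_nonpos : ∀ x ∈ Set.Icc (0 : ℝ) T,
      Real.exp (-(K * x)) * -(K * 1) * (η x ^ 2 / (1 + h * η x ^ 2)) +
        Real.exp (-(K * x)) *
          (((2 : ℕ) : ℝ) * η x ^ 1 * η' x * (1 + h * η x ^ 2) -
            η x ^ 2 * (0 + h * (((2 : ℕ) : ℝ) * η x ^ 1 * η' x))) /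
            (1 + h * η x ^ 2) ^ 2 ≤ 0 := by
    intro x hx
    have hv := hvpos x
    have hE : (0 : ℝ) < Real.exp (-(K * x)) := Real.exp_pos _
    have hun : 0 ≤ η x := hnonneg x hx
    have key : 2 * η x * η' x ≤ K * η x ^ 2 * (1 + h * η x ^ 2) := by
      have h2 := mul_le_mul_of_nonneg_left (hineq x hx)
        (by linarith : (0 : ℝ) ≤ 2 * η x)
      rw [hK]
      nlinarith [h2]
    have heq : Real.exp (-(K * x)) * -(K * 1) * (η x ^ 2 / (1 + h * η x ^ 2)) +
        Real.exp (-(K * x)) *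
          (((2 : ℕ) : ℝ) * η x ^ 1 * η' x * (1 + h * η x ^ 2) -
            η x ^ 2 * (0 + h * (((2 : ℕ) : ℝ) * η x ^ 1 * η' x))) /
            (1 + h * η x ^ 2) ^ 2 =
        Real.exp (-(K * x)) * (2 * η x * η' x - K * η x ^ 2 * (1 + h * η x ^ 2)) /
          (1 + h * η x ^ 2) ^ 2 := by
      field_simp
      ring
    rw [heq]
    apply div_nonpos_of_nonpos_of_nonneg
    · exact mul_nonpos_of_nonneg_of_nonpos hE.le (by linarith)
    · positivity
  -- g is antitone on [0, T]
  have hanti : AntitoneOn g (Set.Icc (0 : ℝ) T) := by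
    apply antitoneOn_of_deriv_nonpos (convex_Icc 0 T)
    · intro x hx
      exact (hgderiv x hx).continuousAt.continuousWithinAt
    · intro x hx
      rw [interior_Icc] at hx
      exact (hgderiv x (Set.mem_Icc_of_Ioo hx)).differentiableAt.differentiableWithinAt
    · intro x hx
      rw [interior_Icc] at hx
      have hx' : x ∈ Set.Icc (0 : ℝ) T := Set.mem_Icc_of_Ioo hx
      rw [(hgderiv x hx').deriv]
      exact hderiv_nonpos x hx'
  intro t ht
  have h0mem : (0 : ℝ) ∈ Set.Icc (0 : ℝ) T := Set.left_mem_Icc.2 hT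
  have hgle : g t ≤ g 0 := hanti h0mem ht ht.1
  have hEpos : (0 : ℝ) < Real.exp (K * t) := Real.exp_pos _
  have hv0 : (0 : ℝ) < 1 + h * η₀ ^ 2 := by positivity
  have hvt := hvpos t
  -- unfold g
  have hg0 : g 0 = η₀ ^ 2 / (1 + h * η₀ ^ 2) := by
    simp [hg, h0]
  have hgt : g t = (Real.exp (K * t))⁻¹ * (η t ^ 2 / (1 + h * η t ^ 2)) := by
    simp [hg, Real.exp_neg]
  rw [hgt, hg0] at hgle
  have hphi : η t ^ 2 / (1 + h * η t ^ 2) ≤ Real.exp (K * t) * (η₀ ^ 2 / (1 + h * η₀ ^ 2)) := by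
    rw [inv_mul_le_iff₀ hEpos] at hgle
    exact hgle
  have hcross : η t ^ 2 * (1 + h * η₀ ^ 2) ≤ Real.exp (K * t) * η₀ ^ 2 * (1 + h * η t ^ 2) := by
    rw [mul_div_assoc'] at hphi
    rw [div_le_div_iff₀ hvt hv0] at hphi
    linarith [hphi]
  have hD := hsmall t ht
  rw [le_div_iff₀ hD]
  nlinarith [hcross]
end
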